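/- (Invariant of the condensation algorithm) Let F be a field, let A : ℕ × ℕ → F, and let C : ℕ → ℕ → ℕ → F satisfy conditions (i)–(iii) of the condensation recursion: C₀(i,j) = A(i,j); C₁(i,j) = A(i,j)·A(i+1,j+1) − A(i,j+1)·A(i+1,j); and for k ≥ 1, whenever C_{k−1}(i+1,j+1) ≠ 0, C_{k+1}(i,j) = (C_k(i,j)·C_k(i+1,j+1) − C_k(i,j+1)·C_k(i+1,j)) / C_{k−1}(i+1,j+1). Suppose that for all k ≥ 1 and all i, j, C_{k−1}(i+1,j+1) ≠ 0. Then for every k and all i, j, C_k(i,j) equals the determinant of the (k+1)×(k+1) consecutive minor of A with entries A(i+s, j+t) for 0 ≤ s,t ≤ k. -/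

import Mathlib

set_option linter.unreachableTactic false
set_option linter.unusedTactic false

open Matrix

private lemma dj_aux {F : Type*} [Field F] {n : ℕ} (M : Matrix (Fin (n+2)) (Fin (n+2)) F)
    (hE : (M.submatrix (fun i : Fin n => i.succ.castSucc)
        (fun i : Fin n => i.succ.castSucc)).det ≠ 0) :
    M.det * (M.submatrix (fun i : Fin n => i.succ.castSucc)
        (fun i : Fin n => i.succ.castSucc)).det =
      (M.submatrix Fin.castSucc Fin.castSucc).det * (M.submatrix Fin.succ Fin.succ).det -
      (M.submatrix Fin.castSucc Fin.succ).det * (M.submatrix Fin.succ Fin.castSucc).det := by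
  set r : Fin n → Fin (n+2) := fun i => i.succ.castSucc with hr
  set pp : Fin 2 → Fin (n+2) := ![0, Fin.last (n+1)] with hpp
  have hppv : ∀ q : Fin 2, (pp q : ℕ) = if q = 0 then 0 else n + 1 := by
    intro q; fin_cases q <;> simp [hpp]
  set E := M.submatrix r r with hEdef
  set B := M.submatrix r pp with hB
  set Cm := M.submatrix pp r with hC
  set D := M.submatrix pp pp with hD
  have : Invertible E := E.invertibleOfIsUnitDet (isUnit_iff_ne_zero.mpr hE)
  set S := D - Cm * ⅟E * B with hS
  -- equivalences
  have hinj2 : Function.Bijective (Sum.elim r pp) := by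
    rw [Fintype.bijective_iff_injective_and_card]
    refine ⟨?_, by simp⟩
    rintro (a | a) (b | b) h <;>
      simp only [Sum.elim_inl, Sum.elim_inr] at h <;>
      [skip; skip; skip; skip]
    · have := congrArg Fin.val h
      simp [hr] at this
      exact congrArg Sum.inl (Fin.ext this)
    · have := congrArg Fin.val h
      have hb := hppv b
      simp [hr] at this
      rw [hb] at this
      split at this <;> omega
    · have := congrArg Fin.val h
      have ha := hppv a
      simp [hr] at this
      rw [ha] at this
      split at this <;> omega
    · have := congrArg Fin.val h
      rw [hppv a, hppv b] at this
      congr 1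
      fin_cases a <;> fin_cases b <;> simp_all <;> omega
  set e2 : (Fin n ⊕ Fin 2) ≃ Fin (n+2) := Equiv.ofBijective _ hinj2 with he2
  have hM2 : M.submatrix e2 e2 = fromBlocks E B Cm D := by
    ext x y
    rcases x with x | x <;> rcases y with y | y <;> rfl
  have hdetM : M.det = E.det * S.det := by
    rw [← det_submatrix_equiv_self e2, hM2, det_fromBlocks₁₁]
  -- the corner minors
  set fm : Fin 2 → (Fin (n+1) → Fin (n+2)) := ![Fin.castSucc, Fin.succ] with hfm
  have hfmv : ∀ p : Fin 2, ∀ x : Fin (n+1), (fm p x : ℕ) = if p = 0 then (x : ℕ) else (x : ℕ) + 1 := by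
    intro p x; fin_cases p <;>
      simp only [hfm, Matrix.cons_val_zero, Matrix.cons_val_one, Matrix.head_cons,
        Fin.coe_castSucc, Fin.val_succ] <;> simp
  set gm : Fin 2 → (Fin n ⊕ Fin 1 → Fin (n+1)) :=
    ![Sum.elim Fin.succ (fun _ => 0), Sum.elim Fin.castSucc (fun _ => Fin.last n)] with hgm
  have hgbij : ∀ p : Fin 2, Function.Bijective (gm p) := by
    intro p
    rw [Fintype.bijective_iff_injective_and_card]
    refine ⟨?_, by simp⟩
    rintro (a | a) (b | b) h <;> fin_cases p <;>
      simp only [hgm, Matrix.cons_val_zero, Matrix.cons_val_one, Matrix.head_cons,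
        Sum.elim_inl, Sum.elim_inr] at h <;>
      first
      | (exact congrArg Sum.inl (by
          have := congrArg Fin.val h
          simp at this
          exact Fin.ext (by omega)))
      | (exfalso;
         have := congrArg Fin.val h;
         simp [Fin.val_last] at this <;> omega)
      | (congr 1; exact Subsingleton.elim a b)
  have hkey : ∀ p : Fin 2, (fm p) ∘ (gm p) = Sum.elim r (fun _ => pp p) := by
    intro p
    funext x
    rcases x with x | x <;> fin_cases p <;>
      simp [hfm, hgm, hr, hpp, Fin.succ_castSucc, -Fin.castSucc_succ] <;>
      apply Fin.ext <;> simp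
  have hk : ∀ p (x : Fin n ⊕ Fin 1), fm p (gm p x) = Sum.elim r (fun _ => pp p) x :=
    fun p x => congrFun (hkey p) x
  set ge : Fin 2 → ((Fin n ⊕ Fin 1) ≃ Fin (n+1)) := fun p => Equiv.ofBijective _ (hgbij p)
    with hge
  have hgeval : ∀ p x, ge p x = gm p x := fun p x => rfl
  have hcorner : ∀ p q : Fin 2,
      (M.submatrix (fm p) (fm q)).det =
        ((Equiv.Perm.sign ((ge q).trans (ge p).symm) : ℤ) : F) * (E.det * S p q) := by
    intro p q
    have h1 : (M.submatrix (fm p) (fm q)).submatrix (gm p) (gm q) =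
        fromBlocks E (Matrix.of fun (s : Fin n) (_ : Fin 1) => M (r s) (pp q))
          (Matrix.of fun (_ : Fin 1) (t : Fin n) => M (pp p) (r t))
          (Matrix.of fun (_ : Fin 1) (_ : Fin 1) => M (pp p) (pp q)) := by
      ext x y
      rcases x with x | x <;> rcases y with y | y <;>
        simp [Matrix.submatrix_apply, hk, hEdef]
    have h2 : (M.submatrix (fm p) (fm q)).submatrix (ge q) (ge q) =
        ((M.submatrix (fm p) (fm q)).submatrix (gm p) (gm q)).submatrix
          ((ge q).trans (ge p).symm) id := by
      ext x y
      simp only [Matrix.submatrix_apply, id_eq, Equiv.trans_apply]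
      show M (fm p ((ge q) x)) (fm q ((ge q) y)) =
        M (fm p ((ge p) ((ge p).symm ((ge q) x)))) (fm q ((ge q) y))
      rw [(ge p).apply_symm_apply]
    rw [← det_submatrix_equiv_self (ge q) (M.submatrix (fm p) (fm q)), h2, h1]
    rw [Matrix.det_permute, det_fromBlocks₁₁]
    congr 1
    congr 1
    rw [Matrix.det_unique]
    have hmul : ∀ (x y : Fin 1),
        ((Matrix.of fun (_ : Fin 1) (t : Fin n) => M (pp p) (r t)) * ⅟E *
          (Matrix.of fun (s : Fin n) (_ : Fin 1) => M (r s) (pp q))) x y =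
        (Cm * ⅟E * B) p q := by
      intro x y
      simp [Matrix.mul_apply, hC, hB]
    simp only [Matrix.sub_apply, Matrix.of_apply, hmul, hS, hD, Matrix.submatrix_apply]
  have hsgn : ((Equiv.Perm.sign ((ge 1).trans (ge 0).symm) : ℤ) : F) *
      ((Equiv.Perm.sign ((ge 0).trans (ge 1).symm) : ℤ) : F) = 1 := by
    have h10 : (ge 0).trans (ge 1).symm = ((ge 1).trans (ge 0).symm)⁻¹ := rfl
    rw [h10, map_inv, Int.units_inv_eq_self, ← Int.cast_mul, ← Units.val_mul,
      Int.units_mul_self, Units.val_one, Int.cast_one]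
  have h00 := hcorner 0 0
  have h11 := hcorner 1 1
  have h01 := hcorner 0 1
  have h10 := hcorner 1 0
  simp only [Equiv.self_trans_symm, Equiv.Perm.sign_refl, Units.val_one, Int.cast_one,
    one_mul] at h00 h11
  have hf0 : fm 0 = Fin.castSucc := rfl
  have hf1 : fm 1 = Fin.succ := rfl
  rw [← hf0, ← hf1, hdetM, det_fin_two S, h00, h11, h01, h10]
  linear_combination (E.det ^ 2 * S 0 1 * S 1 0) * hsgn

private lemma pair_congr {F : Type*} (A : ℕ × ℕ → F) {a b a' b' : ℕ}
    (h1 : a = a') (h2 : b = b') : A (a, b) = A (a', b') := by rw [h1, h2]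

theorem dodgson_algorithm_invariant {F : Type*} [Field F]
    (A : ℕ × ℕ → F) (C : ℕ → ℕ → ℕ → F)
    (h0 : ∀ i j, C 0 i j = A (i, j))
    (h1 : ∀ i j, C 1 i j =
      A (i, j) * A (i + 1, j + 1) - A (i, j + 1) * A (i + 1, j))
    (hstep : ∀ k, 1 ≤ k → ∀ i j, C (k - 1) (i + 1) (j + 1) ≠ 0 →
      C (k + 1) i j =
        (C k i j * C k (i + 1) (j + 1) - C k i (j + 1) * C k (i + 1) j) /
          C (k - 1) (i + 1) (j + 1))
    (hne : ∀ k, 1 ≤ k → ∀ i j, C (k - 1) (i + 1) (j + 1) ≠ 0) :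
    ∀ k i j, C k i j =
      (Matrix.of fun s t : Fin (k + 1) => A (i + s, j + t)).det := by
  intro k
  induction k using Nat.twoStepInduction with
  | zero =>
    intro i j
    rw [h0]
    show _ = (Matrix.of fun s t : Fin 1 => A (i + s, j + t)).det
    rw [Matrix.det_fin_one]
    simp
  | one =>
    intro i j
    rw [h1]
    show _ = (Matrix.of fun s t : Fin 2 => A (i + s, j + t)).det
    rw [Matrix.det_fin_two]
    simp
  | more k ih ih1 =>
    intro i j
    have hne' : C k (i + 1) (j + 1) ≠ 0 := by
      simpa using hne (k + 1) (by omega) i j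
    have h := hstep (k + 1) (by omega) i j (by simpa using hne (k + 1) (by omega) i j)
    simp only [Nat.add_sub_cancel] at h
    let M : Matrix (Fin (k + 1 + 2)) (Fin (k + 1 + 2)) F :=
      Matrix.of fun s t => A (i + s, j + t)
    show C (k + 1 + 1) i j = M.det
    have hIn : M.submatrix (fun i : Fin (k + 1) => i.succ.castSucc)
        (fun i : Fin (k + 1) => i.succ.castSucc) =
        Matrix.of (fun s t : Fin (k + 1) => A (i + 1 + s, j + 1 + t)) := by
      ext s t
      exact pair_congr A
        (by simp only [Fin.coe_castSucc, Fin.val_succ]; omega)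
        (by simp only [Fin.coe_castSucc, Fin.val_succ]; omega)
    have hTL : M.submatrix Fin.castSucc Fin.castSucc =
        Matrix.of (fun s t : Fin (k + 1 + 1) => A (i + s, j + t)) := by
      ext s t
      exact pair_congr A
        (by simp only [Fin.coe_castSucc]) (by simp only [Fin.coe_castSucc])
    have hBR : M.submatrix Fin.succ Fin.succ =
        Matrix.of (fun s t : Fin (k + 1 + 1) => A (i + 1 + s, j + 1 + t)) := by
      ext s t
      exact pair_congr A
        (by simp only [Fin.val_succ]; omega) (by simp only [Fin.val_succ]; omega)
    have hTR : M.submatrix Fin.castSucc Fin.succ =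
        Matrix.of (fun s t : Fin (k + 1 + 1) => A (i + s, j + 1 + t)) := by
      ext s t
      exact pair_congr A
        (by simp only [Fin.coe_castSucc]) (by simp only [Fin.val_succ]; omega)
    have hBL : M.submatrix Fin.succ Fin.castSucc =
        Matrix.of (fun s t : Fin (k + 1 + 1) => A (i + 1 + s, j + t)) := by
      ext s t
      exact pair_congr A
        (by simp only [Fin.val_succ]; omega) (by simp only [Fin.coe_castSucc])
    have hEne : (Matrix.of fun s t : Fin (k + 1) => A (i + 1 + s, j + 1 + t)).det ≠ 0 := by
      rw [← ih (i + 1) (j + 1)]; exact hne'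
    have dj := dj_aux (n := k + 1) M (by rw [hIn]; exact hEne)
    rw [hIn, hTL, hBR, hTR, hBL] at dj
    rw [h, ih1 i j, ih1 (i + 1) (j + 1), ih1 i (j + 1), ih1 (i + 1) j, ih (i + 1) (j + 1),
      div_eq_iff hEne]
    exact dj.symm
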